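/- arXiv:2205.08867 — 9 statements merged into one kernel-verified Lean document; each statement's English description precedes it below -/
import Mathlib

section
/- If (f,g) \in \dot H^1(\mathbb{R}^4)\times L^2(\mathbb{R}^4) with \|g\|_{L^2} \le \|Q\|_{\dot H^1}, then \|g\|_{L^2}^2 \le 4\,\mathcal{E}_Z(f,g). -/
open MeasureTheory

noncomputable section

abbrev R4 := EuclideanSpace ℝ (Fin 4)

/-- The homogeneous Sobolev norm `‖f‖_{Ḣ¹} = (∫ |∇f|²)^{1/2}`. -/
def H1norm (f : R4 → ℂ) : ℝ := Real.sqrt (∫ x : R4, ‖fderiv ℝ f x‖ ^ 2)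

/-- The `L²` norm of a real-valued function. -/
def L2norm (g : R4 → ℝ) : ℝ := Real.sqrt (∫ x : R4, g x ^ 2)

/-- The `L⁴` norm `(∫ |f|⁴)^{1/4}`. -/
def L4norm (f : R4 → ℂ) : ℝ := (∫ x : R4, ‖f x‖ ^ 4) ^ ((4 : ℝ)⁻¹)

/-- The Zakharov energy `E_Z(f,g) = ∫ ½|∇f|² + ¼|g|² + ½ Re(g)|f|²` (`g` real-valued). -/
def EZ (f : R4 → ℂ) (g : R4 → ℝ) : ℝ :=
  ∫ x : R4, ((1 / 2) * ‖fderiv ℝ f x‖ ^ 2 + (1 / 4) * g x ^ 2 + (1 / 2) * g x * ‖f x‖ ^ 2)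

/-- If ‖g‖_{L²} ≤ ‖Q‖_{Ḣ¹} then ‖g‖_{L²}² ≤ 4 E_Z(f,g).  Here `Qn` denotes ‖Q‖_{Ḣ¹},
and the sharp Sobolev inequality is assumed. -/
theorem wave_mass_le_energy (f : R4 → ℂ) (g : R4 → ℝ) (Qn : ℝ) (hQn : 0 < Qn)
    (hf1 : Integrable (fun x : R4 => ‖fderiv ℝ f x‖ ^ 2))
    (hf4 : Integrable (fun x : R4 => ‖f x‖ ^ 4))
    (hg2 : Integrable (fun x : R4 => g x ^ 2))
    (hfg : Integrable (fun x : R4 => g x * ‖f x‖ ^ 2))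
    (hSob : L4norm f ^ 2 ≤ Qn⁻¹ * H1norm f ^ 2)
    (hgQ : L2norm g ≤ Qn) :
    L2norm g ^ 2 ≤ 4 * EZ f g := by
  set A := ∫ x : R4, ‖fderiv ℝ f x‖ ^ 2 with hA
  set B := ∫ x : R4, g x ^ 2 with hB
  set C := ∫ x : R4, ‖f x‖ ^ 4 with hC
  set D := ∫ x : R4, g x * ‖f x‖ ^ 2 with hD
  have hA0 : 0 ≤ A := integral_nonneg fun x => by positivity
  have hB0 : 0 ≤ B := integral_nonneg fun x => by positivity
  have hC0 : 0 ≤ C := integral_nonneg fun x => by positivity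
  have hH1 : H1norm f ^ 2 = A := Real.sq_sqrt hA0
  have hL2 : L2norm g ^ 2 = B := Real.sq_sqrt hB0
  have hL4 : L4norm f ^ 2 = Real.sqrt C := by
    rw [L4norm, ← Real.rpow_natCast (C ^ ((4:ℝ)⁻¹)) 2, ← Real.rpow_mul hC0,
      Real.sqrt_eq_rpow]
    norm_num
  have hsC : Real.sqrt C ≤ Qn⁻¹ * A := by rw [← hH1, ← hL4]; exact hSob
  have hCle : C ≤ (Qn⁻¹ * A) ^ 2 := by
    calc C = Real.sqrt C ^ 2 := (Real.sq_sqrt hC0).symm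
    _ ≤ (Qn⁻¹ * A) ^ 2 := pow_le_pow_left₀ (Real.sqrt_nonneg C) hsC 2
  have hBle : B ≤ Qn ^ 2 := by
    calc B = L2norm g ^ 2 := hL2.symm
    _ ≤ Qn ^ 2 := pow_le_pow_left₀ (Real.sqrt_nonneg _) hgQ 2
  have hEZ : EZ f g = (1/2) * A + (1/4) * B + (1/2) * D := by
    have h1 : Integrable (fun x : R4 => (1/2 : ℝ) * ‖fderiv ℝ f x‖ ^ 2) := hf1.const_mul _
    have h2 : Integrable (fun x : R4 => (1/4 : ℝ) * g x ^ 2) := hg2.const_mul _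
    have h3 : Integrable (fun x : R4 => (1/2 : ℝ) * (g x * ‖f x‖ ^ 2)) := hfg.const_mul _
    have h12 : Integrable (fun x : R4 =>
        (1/2 : ℝ) * ‖fderiv ℝ f x‖ ^ 2 + (1/4 : ℝ) * g x ^ 2) := h1.add h2
    rw [EZ]
    simp_rw [mul_assoc]
    rw [integral_add h12 h3, integral_add h1 h2, integral_const_mul, integral_const_mul,
      integral_const_mul]
  have key : -D ≤ A := by
    rcases eq_or_lt_of_le hA0 with hAz | hApos
    · have hCz : C = 0 := by
        have h1 : Real.sqrt C ≤ 0 := by rw [← hAz] at hsC; simpa using hsC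
        nlinarith [Real.sq_sqrt hC0, Real.sqrt_nonneg C]
      have hf0 : ∀ᵐ x : R4, ‖f x‖ ^ 4 = 0 := by
        have h := (integral_eq_zero_iff_of_nonneg_ae
          (Filter.Eventually.of_forall (fun x : R4 => by positivity)) hf4).mp hCz
        filter_upwards [h] with x hx using hx
      have hD0 : D = 0 := by
        rw [hD]
        refine integral_eq_zero_of_ae ?_
        filter_upwards [hf0] with x hx
        have hfx : ‖f x‖ = 0 := by
          have := pow_eq_zero_iff (n := 4) (by norm_num) |>.mp hx
          exact this
        show g x * ‖f x‖ ^ 2 = 0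
        rw [hfx]; ring
      rw [hD0, neg_zero]; exact hA0
    · set t : ℝ := A / Qn ^ 2 with ht
      have htpos : 0 < t := div_pos hApos (by positivity)
      have hpt : ∀ x : R4, -(g x * ‖f x‖ ^ 2) ≤ t/2 * g x ^ 2 + 1/(2*t) * ‖f x‖ ^ 4 := by
        intro x
        rw [← sub_nonneg]
        have e : t/2 * g x ^ 2 + 1/(2*t) * ‖f x‖ ^ 4 - -(g x * ‖f x‖ ^ 2)
            = (t * g x + ‖f x‖ ^ 2) ^ 2 / (2*t) := by
          field_simp
          ring
        rw [e]
        positivity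
      have hsum : Integrable (fun x : R4 => t/2 * g x ^ 2 + 1/(2*t) * ‖f x‖ ^ 4) :=
        (hg2.const_mul _).add (hf4.const_mul _)
      have hneg : Integrable (fun x : R4 => -(g x * ‖f x‖ ^ 2)) := hfg.neg
      have hint : -D ≤ t/2 * B + 1/(2*t) * C := by
        have h := integral_mono hneg hsum hpt
        rw [integral_neg, integral_add (hg2.const_mul _) (hf4.const_mul _),
          integral_const_mul, integral_const_mul] at h
        exact h
      have hA' : A ≠ 0 := ne_of_gt hApos
      have hQ' : Qn ≠ 0 := ne_of_gt hQn
      have h1 : t/2 * B ≤ A/2 := by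
        have h := mul_le_mul_of_nonneg_left hBle htpos.le
        have htQ : t * Qn ^ 2 = A := by rw [ht]; field_simp
        calc t/2 * B = (t * B) / 2 := by ring
        _ ≤ (t * Qn ^ 2) / 2 := by linarith
        _ = A/2 := by rw [htQ]
      have h2 : 1/(2*t) * C ≤ A/2 := by
        have hCle' : C ≤ A ^ 2 / Qn ^ 2 := by
          calc C ≤ (Qn⁻¹ * A) ^ 2 := hCle
          _ = A ^ 2 / Qn ^ 2 := by field_simp
        have h := mul_le_mul_of_nonneg_left hCle' (by positivity : (0:ℝ) ≤ 1/(2*t))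
        have e : 1/(2*t) * (A ^ 2 / Qn ^ 2) = A/2 := by
          rw [ht]; field_simp
        rw [e] at h
        linarith
      linarith
  rw [hL2, hEZ]
  linarith
end
end

section
/- If (f,g) \in \dot H^1(\mathbb{R}^4)\times L^2(\mathbb{R}^4) with \|f\|_{\dot H^1} \le \|Q\|_{\dot H^1}, then \|f\|_{\dot H^1}^2 \le 4\,\mathcal{E}_Z(f,g). -/
open MeasureTheory

noncomputable section

/-- If ‖f‖_{Ḣ¹} ≤ ‖Q‖_{Ḣ¹} then ‖f‖_{Ḣ¹}² ≤ 4 E_Z(f,g).  Here `Qn` denotes ‖Q‖_{Ḣ¹},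
and the sharp Sobolev inequality is assumed. -/
theorem schrodinger_energy_le_energy (f : R4 → ℂ) (g : R4 → ℝ) (Qn : ℝ) (hQn : 0 < Qn)
    (hf1 : Integrable (fun x : R4 => ‖fderiv ℝ f x‖ ^ 2))
    (hf4 : Integrable (fun x : R4 => ‖f x‖ ^ 4))
    (hg2 : Integrable (fun x : R4 => g x ^ 2))
    (hfg : Integrable (fun x : R4 => g x * ‖f x‖ ^ 2))
    (hSob : L4norm f ^ 2 ≤ Qn⁻¹ * H1norm f ^ 2)
    (hfQ : H1norm f ≤ Qn) :
    H1norm f ^ 2 ≤ 4 * EZ f g := by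
  set A := ∫ x : R4, ‖fderiv ℝ f x‖ ^ 2 with hAdef
  set B := ∫ x : R4, ‖f x‖ ^ 4 with hBdef
  set G := ∫ x : R4, g x ^ 2 with hGdef
  set M := ∫ x : R4, g x * ‖f x‖ ^ 2 with hMdef
  have hA0 : 0 ≤ A := integral_nonneg fun x => by positivity
  have hB0 : 0 ≤ B := integral_nonneg fun x => by positivity
  have hH : H1norm f ^ 2 = A := Real.sq_sqrt hA0
  have hL40 : 0 ≤ L4norm f := Real.rpow_nonneg hB0 _
  have hL4 : (L4norm f ^ 2) ^ 2 = B := by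
    rw [← pow_mul, L4norm, ← Real.rpow_natCast (B ^ ((4:ℝ)⁻¹)) 4,
      ← Real.rpow_mul hB0]
    norm_num
  have hAQ : A ≤ Qn ^ 2 := by
    rw [← hH]
    have := pow_le_pow_left₀ (Real.sqrt_nonneg _) hfQ 2
    simpa [H1norm] using this
  have hBA : B ≤ A := by
    have h1 : (L4norm f ^ 2) ^ 2 ≤ (Qn⁻¹ * A) ^ 2 := by
      apply pow_le_pow_left₀ (by positivity)
      rwa [hH] at hSob
    rw [hL4] at h1
    have h2 : (Qn⁻¹ * A) ^ 2 ≤ A := by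
      rw [mul_pow]
      have h3 : A ^ 2 ≤ Qn ^ 2 * A := by nlinarith
      calc Qn⁻¹ ^ 2 * A ^ 2 ≤ Qn⁻¹ ^ 2 * (Qn ^ 2 * A) := by
            apply mul_le_mul_of_nonneg_left h3 (by positivity)
        _ = A := by field_simp
    linarith
  have hEZ : EZ f g = (1/2) * A + (1/4) * G + (1/2) * M := by
    unfold EZ
    have i1 : Integrable (fun x : R4 => (1/2 : ℝ) * ‖fderiv ℝ f x‖ ^ 2) := hf1.const_mul _
    have i2 : Integrable (fun x : R4 => (1/4 : ℝ) * g x ^ 2) := hg2.const_mul _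
    have i3 : Integrable (fun x : R4 => (1/2 : ℝ) * g x * ‖f x‖ ^ 2) := by
      simpa [mul_assoc] using hfg.const_mul (1/2 : ℝ)
    have i12 : Integrable (fun x : R4 =>
        (1/2 : ℝ) * ‖fderiv ℝ f x‖ ^ 2 + (1/4 : ℝ) * g x ^ 2) := i1.add i2
    rw [integral_add i12 i3, integral_add i1 i2, integral_const_mul, integral_const_mul,
      show (fun x : R4 => (1/2 : ℝ) * g x * ‖f x‖ ^ 2)
        = fun x : R4 => (1/2 : ℝ) * (g x * ‖f x‖ ^ 2) from funext fun x => by ring,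
      integral_const_mul]
  have key : 0 ≤ G + 2 * M + B := by
    have hint : Integrable (fun x : R4 => g x ^ 2 + 2 * (g x * ‖f x‖ ^ 2)) :=
      hg2.add ((hfg.const_mul 2) : Integrable (fun x : R4 => 2 * (g x * ‖f x‖ ^ 2)))
    have hnn : 0 ≤ ∫ x : R4, (g x ^ 2 + 2 * (g x * ‖f x‖ ^ 2) + ‖f x‖ ^ 4) :=
      integral_nonneg fun x => by
        show (0:ℝ) ≤ _
        nlinarith [sq_nonneg (g x + ‖f x‖ ^ 2)]
    have hfg2 : Integrable (fun x : R4 => 2 * (g x * ‖f x‖ ^ 2)) := hfg.const_mul 2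
    rwa [integral_add hint hf4, integral_add hg2 hfg2, integral_const_mul] at hnn
  rw [hH, hEZ]
  linarith
end
end

section
/- For (f,g)\in \dot H^1(\mathbb{R}^4)\times L^2(\mathbb{R}^4), one has the lower bound 4\mathcal{E}_Z(f,g) \ge \|g\|_{L^2}^2 + 2\|Q\|_{\dot H^1}^{-1}\|f\|_{\dot H^1}^2(\|Q\|_{\dot H^1} - \|g\|_{L^2}). -/
open MeasureTheory

noncomputable section

set_option maxHeartbeats 1000000 in
/-- The lower bound ,
with `Qn` denoting ‖Q‖_{Ḣ¹} and the sharp Sobolev inequality assumed. -/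
theorem energy_lower_bound_wave (f : R4 → ℂ) (g : R4 → ℝ) (Qn : ℝ) (hQn : 0 < Qn)
    (hf1 : Integrable (fun x : R4 => ‖fderiv ℝ f x‖ ^ 2))
    (hf4 : Integrable (fun x : R4 => ‖f x‖ ^ 4))
    (hg2 : Integrable (fun x : R4 => g x ^ 2))
    (hfg : Integrable (fun x : R4 => g x * ‖f x‖ ^ 2))
    (hSob : L4norm f ^ 2 ≤ Qn⁻¹ * H1norm f ^ 2)
    :
    L2norm g ^ 2 + 2 * Qn⁻¹ * H1norm f ^ 2 * (Qn - L2norm g) ≤ 4 * EZ f g := by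
  set A : ℝ := ∫ x : R4, ‖fderiv ℝ f x‖ ^ 2 with hAdef
  set B : ℝ := ∫ x : R4, g x ^ 2 with hBdef
  set C : ℝ := ∫ x : R4, g x * ‖f x‖ ^ 2 with hCdef
  set D : ℝ := ∫ x : R4, ‖f x‖ ^ 4 with hDdef
  have hA0 : 0 ≤ A := integral_nonneg fun x => sq_nonneg _
  have hB0 : 0 ≤ B := integral_nonneg fun x => sq_nonneg _
  have hD0 : 0 ≤ D := integral_nonneg fun x => pow_nonneg (norm_nonneg _) 4
  have hH1 : H1norm f ^ 2 = A := Real.sq_sqrt hA0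
  have hL2 : L2norm g ^ 2 = B := Real.sq_sqrt hB0
  set sb : ℝ := Real.sqrt B with hsbdef
  set sd : ℝ := Real.sqrt D with hsddef
  have hsb0 : 0 ≤ sb := Real.sqrt_nonneg _
  have hsd0 : 0 ≤ sd := Real.sqrt_nonneg _
  have hsb2 : sb ^ 2 = B := Real.sq_sqrt hB0
  have hsd2 : sd ^ 2 = D := Real.sq_sqrt hD0
  have hL4 : L4norm f ^ 2 = sd := by
    rw [hsddef, L4norm, ← Real.rpow_natCast (_ ^ ((4:ℝ)⁻¹)) 2, ← Real.rpow_mul hD0,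
      Real.sqrt_eq_rpow]
    norm_num
  -- energy decomposition
  have h1i : Integrable (fun x : R4 => (1 / 2 : ℝ) * ‖fderiv ℝ f x‖ ^ 2) := hf1.const_mul _
  have h2i : Integrable (fun x : R4 => (1 / 4 : ℝ) * g x ^ 2) := hg2.const_mul _
  have h3i : Integrable (fun x : R4 => (1 / 2 : ℝ) * g x * ‖f x‖ ^ 2) := by
    simpa [mul_assoc] using hfg.const_mul (1 / 2 : ℝ)
  have hEZ : EZ f g = (1 / 2) * A + (1 / 4) * B + (1 / 2) * C := by
    have e1 : (∫ x : R4, ((1 / 2 : ℝ) * ‖fderiv ℝ f x‖ ^ 2 + (1 / 4) * g x ^ 2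
          + (1 / 2) * g x * ‖f x‖ ^ 2))
        = (∫ x : R4, ((1 / 2 : ℝ) * ‖fderiv ℝ f x‖ ^ 2 + (1 / 4) * g x ^ 2))
          + ∫ x : R4, (1 / 2 : ℝ) * g x * ‖f x‖ ^ 2 :=
      integral_add (h1i.add h2i) h3i
    have e2 : (∫ x : R4, ((1 / 2 : ℝ) * ‖fderiv ℝ f x‖ ^ 2 + (1 / 4) * g x ^ 2))
        = (∫ x : R4, (1 / 2 : ℝ) * ‖fderiv ℝ f x‖ ^ 2) + ∫ x : R4, (1 / 4 : ℝ) * g x ^ 2 :=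
      integral_add h1i h2i
    have e3 : (∫ x : R4, (1 / 2 : ℝ) * ‖fderiv ℝ f x‖ ^ 2) = (1 / 2) * A :=
      integral_const_mul _ _
    have e4 : (∫ x : R4, (1 / 4 : ℝ) * g x ^ 2) = (1 / 4) * B := integral_const_mul _ _
    have e5 : (∫ x : R4, (1 / 2 : ℝ) * g x * ‖f x‖ ^ 2) = (1 / 2) * C := by
      simp only [mul_assoc]
      exact integral_const_mul _ _
    rw [EZ, e1, e2, e3, e4, e5]
  -- key quadratic inequality
  have key : ∀ ε : ℝ, 0 ≤ B + ε ^ 2 * D + 2 * ε * C := by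
    intro ε
    have hint1 : Integrable (fun x : R4 => ε ^ 2 * ‖f x‖ ^ 4) := hf4.const_mul _
    have hint2 : Integrable (fun x : R4 => 2 * ε * (g x * ‖f x‖ ^ 2)) := hfg.const_mul _
    have hpt : ∀ x : R4, (0:ℝ) ≤ g x ^ 2 + ε ^ 2 * ‖f x‖ ^ 4 + 2 * ε * (g x * ‖f x‖ ^ 2) :=
      fun x => by nlinarith [sq_nonneg (g x + ε * ‖f x‖ ^ 2)]
    have h0 : 0 ≤ ∫ x : R4, (g x ^ 2 + ε ^ 2 * ‖f x‖ ^ 4 + 2 * ε * (g x * ‖f x‖ ^ 2)) :=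
      integral_nonneg hpt
    have e1 : (∫ x : R4, (g x ^ 2 + ε ^ 2 * ‖f x‖ ^ 4 + 2 * ε * (g x * ‖f x‖ ^ 2)))
        = (∫ x : R4, (g x ^ 2 + ε ^ 2 * ‖f x‖ ^ 4))
          + ∫ x : R4, 2 * ε * (g x * ‖f x‖ ^ 2) := integral_add (hg2.add hint1) hint2
    have e2 : (∫ x : R4, (g x ^ 2 + ε ^ 2 * ‖f x‖ ^ 4))
        = B + ∫ x : R4, ε ^ 2 * ‖f x‖ ^ 4 := integral_add hg2 hint1
    have e3 : (∫ x : R4, ε ^ 2 * ‖f x‖ ^ 4) = ε ^ 2 * D := integral_const_mul _ _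
    have e4 : (∫ x : R4, 2 * ε * (g x * ‖f x‖ ^ 2)) = 2 * ε * C := integral_const_mul _ _
    rw [e1, e2, e3, e4] at h0
    linarith
  have hL2' : L2norm g = sb := by rw [L2norm, hsbdef, hBdef]
  clear_value A B C D sb sd
  -- Cauchy-Schwarz: -C ≤ sb * sd
  have hCS : -C ≤ sb * sd := by
    rcases eq_or_lt_of_le hD0 with hD | hD
    · -- D = 0 : show C ≥ 0
      have hsd : sd = 0 := by rw [hsddef, ← hD, Real.sqrt_zero]
      rw [hsd, mul_zero]
      by_contra h
      push_neg at h
      have hC : C < 0 := by linarith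
      have hC0 : C ≠ 0 := hC.ne
      have hkey := key ((B + 1) / (-2 * C))
      rw [← hD] at hkey
      have h2 : 2 * ((B + 1) / (-2 * C)) * C = -(B + 1) := by
        field_simp
      nlinarith [hkey, h2]
    · -- D > 0
      have hD' : D ≠ 0 := ne_of_gt hD
      have hkey := key (-C / D)
      have ht : (-C / D) * D = -C := div_mul_cancel₀ _ hD'
      have h1 : (-C / D) ^ 2 * D ^ 2 = C ^ 2 := by
        rw [← mul_pow, ht]; ring
      have h2 : (-C / D) * C * D = -C ^ 2 := by
        rw [mul_right_comm, ht]; ring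
      have hC2 : C ^ 2 ≤ B * D := by
        linarith [mul_nonneg hD.le hkey, h1, h2]
      nlinarith [mul_nonneg hsb0 hsd0, sq_nonneg (sb * sd + C), sq_nonneg (sb * sd - C)]
  -- conclude
  have hSob' : sd ≤ Qn⁻¹ * A := by rw [← hL4, ← hH1]; exact hSob
  have hm1 : sb * sd ≤ sb * (Qn⁻¹ * A) := mul_le_mul_of_nonneg_left hSob' hsb0
  have hm3 : 2 * Qn⁻¹ * A * Qn = 2 * A := by
    field_simp
  rw [hEZ, hL2', hH1]
  linarith [hCS, hm1, hm3, hsb2]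
end
end

section
/- For (f,g)\in \dot H^1(\mathbb{R}^4)\times L^2(\mathbb{R}^4), 4\mathcal{E}_Z(f,g) \ge \|f\|_{\dot H^1}^2 + (\|g\|_{L^2} - \|Q\|_{\dot H^1}^{-1}\|f\|_{\dot H^1}^2)^2 + \|Q\|_{\dot H^1}^{-2}\|f\|_{\dot H^1}^2(\|Q\|_{\dot H^1}^2 - \|f\|_{\dot H^1}^2). -/
open MeasureTheory

noncomputable section

/-- The lower bound
,
with `Qn` denoting ‖Q‖_{Ḣ¹} and the sharp Sobolev inequality assumed. -/
theorem energy_lower_bound_refined (f : R4 → ℂ) (g : R4 → ℝ) (Qn : ℝ) (hQn : 0 < Qn)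
    (hf1 : Integrable (fun x : R4 => ‖fderiv ℝ f x‖ ^ 2))
    (hf4 : Integrable (fun x : R4 => ‖f x‖ ^ 4))
    (hg2 : Integrable (fun x : R4 => g x ^ 2))
    (hfg : Integrable (fun x : R4 => g x * ‖f x‖ ^ 2))
    (hSob : L4norm f ^ 2 ≤ Qn⁻¹ * H1norm f ^ 2)
    :
    H1norm f ^ 2 + (L2norm g - Qn⁻¹ * H1norm f ^ 2) ^ 2
        + Qn⁻¹ ^ 2 * H1norm f ^ 2 * (Qn ^ 2 - H1norm f ^ 2) ≤ 4 * EZ f g := by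
  set A := ∫ x : R4, ‖fderiv ℝ f x‖ ^ 2 with hA
  set B := ∫ x : R4, g x ^ 2 with hB
  set C := ∫ x : R4, g x * ‖f x‖ ^ 2 with hC
  set D := ∫ x : R4, ‖f x‖ ^ 4 with hD
  have hA0 : 0 ≤ A := integral_nonneg fun x => by positivity
  have hB0 : 0 ≤ B := integral_nonneg fun x => by positivity
  have hD0 : 0 ≤ D := integral_nonneg fun x => by positivity
  have hH1 : H1norm f ^ 2 = A := Real.sq_sqrt hA0
  have hL2 : L2norm g ^ 2 = B := Real.sq_sqrt hB0
  have hL2' : L2norm g = Real.sqrt B := rfl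
  have hL4 : L4norm f ^ 2 = Real.sqrt D := by
    rw [L4norm, ← Real.rpow_natCast (D ^ ((4:ℝ)⁻¹)) 2, ← Real.rpow_mul hD0,
      Real.sqrt_eq_rpow]
    norm_num
  -- EZ splits
  have hEZ : EZ f g = (1/2) * A + (1/4) * B + (1/2) * C := by
    rw [hA, hB, hC, EZ]
    simp_rw [mul_assoc]
    have i2 := integral_add (μ := volume) ((hf1.const_mul (1/2)).add (hg2.const_mul (1/4)))
        (hfg.const_mul (1/2))
    have i1 := integral_add (μ := volume) (hf1.const_mul (1/2)) (hg2.const_mul (1/4))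
    simp only [Pi.add_apply] at i2
    rw [i2, i1, integral_const_mul, integral_const_mul, integral_const_mul]
  -- measurable nonneg versions
  have hG2m : AEStronglyMeasurable (fun x : R4 => g x ^ 2) volume := hg2.aestronglyMeasurable
  have hGm : AEStronglyMeasurable (fun x : R4 => |g x|) volume := by
    have := Real.continuous_sqrt.comp_aestronglyMeasurable hG2m
    refine this.congr (Filter.Eventually.of_forall fun x => ?_)
    simp [Real.sqrt_sq_eq_abs]
  have hF4m : AEStronglyMeasurable (fun x : R4 => ‖f x‖ ^ 4) volume := hf4.aestronglyMeasurable
  have hFm : AEStronglyMeasurable (fun x : R4 => ‖f x‖ ^ 2) volume := by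
    have := Real.continuous_sqrt.comp_aestronglyMeasurable hF4m
    refine this.congr (Filter.Eventually.of_forall fun x => ?_)
    show Real.sqrt (‖f x‖ ^ 4) = ‖f x‖ ^ 2
    rw [show ‖f x‖ ^ 4 = (‖f x‖ ^ 2) ^ 2 by ring, Real.sqrt_sq (by positivity)]
  -- Memℒp
  have hGmem : MemLp (fun x : R4 => |g x|) 2 volume := by
    rw [memLp_two_iff_integrable_sq hGm]
    exact hg2.congr (Filter.Eventually.of_forall fun x => by simp [sq_abs])
  have hFmem : MemLp (fun x : R4 => ‖f x‖ ^ 2) 2 volume := by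
    rw [memLp_two_iff_integrable_sq hFm]
    exact hf4.congr (Filter.Eventually.of_forall fun x => by ring_nf)
  -- Cauchy–Schwarz
  have hCS : ∫ x : R4, |g x| * ‖f x‖ ^ 2 ≤ Real.sqrt B * Real.sqrt D := by
    have h2 : (2:ℝ).HolderConjugate 2 := by
      constructor <;> norm_num
    have hofr : ENNReal.ofReal (2:ℝ) = 2 := by norm_num
    have hGmem' : MemLp (fun x : R4 => |g x|) (ENNReal.ofReal (2:ℝ)) volume := by
      rw [hofr]; exact hGmem
    have hFmem' : MemLp (fun x : R4 => ‖f x‖ ^ 2) (ENNReal.ofReal (2:ℝ)) volume := by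
      rw [hofr]; exact hFmem
    have := integral_mul_le_Lp_mul_Lq_of_nonneg (μ := volume) h2
      (Filter.Eventually.of_forall fun x => abs_nonneg (g x))
      (Filter.Eventually.of_forall fun x => by positivity)
      hGmem' hFmem' 
    have hx : ∀ y : ℝ, y ^ (2:ℝ) = y ^ (2:ℕ) := fun y => by
      rw [show (2:ℝ) = ((2:ℕ):ℝ) by norm_num, Real.rpow_natCast]
    have eB : (∫ x : R4, |g x| ^ (2:ℝ)) = B := by
      rw [hB]
      refine integral_congr_ae (Filter.Eventually.of_forall fun x => ?_)
      show |g x| ^ (2:ℝ) = g x ^ 2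
      rw [hx, sq_abs]
    have eD : (∫ x : R4, (‖f x‖ ^ 2) ^ (2:ℝ)) = D := by
      rw [hD]
      refine integral_congr_ae (Filter.Eventually.of_forall fun x => ?_)
      show (‖f x‖ ^ 2) ^ (2:ℝ) = ‖f x‖ ^ 4
      rw [hx]; ring
    rw [eB, eD, ← Real.sqrt_eq_rpow, ← Real.sqrt_eq_rpow] at this
    exact this
  -- lower bound on C
  have hCb : -(Real.sqrt B * Real.sqrt D) ≤ C := by
    have h1 : ∫ x : R4, -(|g x| * ‖f x‖ ^ 2) ≤ C := by
      refine integral_mono ?_ hfg fun x => ?_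
      · have : Integrable (fun x : R4 => |g x * ‖f x‖ ^ 2|) volume := hfg.abs
        refine (this.congr (Filter.Eventually.of_forall fun x => ?_)).neg
        show |g x * ‖f x‖ ^ 2| = |g x| * ‖f x‖ ^ 2
        rw [abs_mul, abs_of_nonneg (by positivity : (0:ℝ) ≤ ‖f x‖ ^ 2)]
      · simp only [neg_le]
        calc -(g x * ‖f x‖ ^ 2) ≤ |g x * ‖f x‖ ^ 2| := neg_le_abs _
        _ = |g x| * ‖f x‖ ^ 2 := by
            rw [abs_mul, abs_of_nonneg (by positivity : (0:ℝ) ≤ ‖f x‖ ^ 2)]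
    calc -(Real.sqrt B * Real.sqrt D) ≤ -(∫ x : R4, |g x| * ‖f x‖ ^ 2) := by
          exact neg_le_neg hCS
    _ = ∫ x : R4, -(|g x| * ‖f x‖ ^ 2) := (integral_neg _).symm
    _ ≤ C := h1
  -- Sobolev rewritten
  have hSob' : Real.sqrt D ≤ Qn⁻¹ * A := by rw [← hL4, ← hH1]; exact hSob
  have hsqB : Real.sqrt B ^ 2 = B := Real.sq_sqrt hB0
  have hsB0 : 0 ≤ Real.sqrt B := Real.sqrt_nonneg B
  have hkey : -(Real.sqrt B * (Qn⁻¹ * A)) ≤ C := by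
    refine le_trans (neg_le_neg ?_) hCb
    exact mul_le_mul_of_nonneg_left hSob' hsB0
  have hQQ : Qn⁻¹ ^ 2 * Qn ^ 2 = 1 := by field_simp
  rw [hEZ, hH1, hL2']
  nlinarith [hkey, hQQ, hsqB, hsB0, hA0]
end
end

section
/- Under the hypotheses 4\mathcal{E}_Z(f,g) \le \|Q\|_{\dot H^1}^2, \|f\|_{\dot H^1} \le \|Q\|_{\dot H^1}, and the sharp Sobolev inequality, one has the refined bound \|f\|_{\dot H^1}^2 \le \frac{\|Q\|_{\dot H^1}^2}{2\|Q\|_{\dot H^1}^2 - 4\mathcal{E}_Z(f,g)}\, 4\mathcal{E}_Z(f,g). -/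
open MeasureTheory

noncomputable section

set_option maxHeartbeats 800000 in
/-- The refined bound  below the
ground state. -/
theorem refined_H1_bound (f : R4 → ℂ) (g : R4 → ℝ) (Qn : ℝ) (hQn : 0 < Qn)
    (hf1 : Integrable (fun x : R4 => ‖fderiv ℝ f x‖ ^ 2))
    (hf4 : Integrable (fun x : R4 => ‖f x‖ ^ 4))
    (hg2 : Integrable (fun x : R4 => g x ^ 2))
    (hfg : Integrable (fun x : R4 => g x * ‖f x‖ ^ 2))
    (hSob : L4norm f ^ 2 ≤ Qn⁻¹ * H1norm f ^ 2)
    (hE : 4 * EZ f g ≤ Qn ^ 2)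
    (hfQ : H1norm f ≤ Qn) :
    H1norm f ^ 2 ≤ Qn ^ 2 / (2 * Qn ^ 2 - 4 * EZ f g) * (4 * EZ f g) := by
  set A := ∫ x : R4, ‖fderiv ℝ f x‖ ^ 2 with hAdef
  set B := ∫ x : R4, g x ^ 2 with hBdef
  set C := ∫ x : R4, g x * ‖f x‖ ^ 2 with hCdef
  set D := ∫ x : R4, ‖f x‖ ^ 4 with hDdef
  have hA0 : 0 ≤ A := integral_nonneg fun x => by positivity
  have hD0 : 0 ≤ D := integral_nonneg fun x => by positivity
  have hH1 : H1norm f ^ 2 = A := Real.sq_sqrt hA0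
  have hL4 : L4norm f ^ 4 = D := by
    rw [L4norm, ← Real.rpow_natCast (D ^ ((4:ℝ)⁻¹)) 4, ← Real.rpow_mul hD0]
    norm_num
  have i1 : Integrable (fun x : R4 => 1/2 * ‖fderiv ℝ f x‖ ^ 2) := hf1.const_mul _
  have i2 : Integrable (fun x : R4 => 1/4 * g x ^ 2) := hg2.const_mul _
  have i3 : Integrable (fun x : R4 => 1/2 * (g x * ‖f x‖ ^ 2)) := hfg.const_mul _
  have i4 : Integrable (fun x : R4 => 2 * (g x * ‖f x‖ ^ 2)) := hfg.const_mul _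
  have i12 : Integrable (fun x : R4 => 1/2 * ‖fderiv ℝ f x‖ ^ 2 + 1/4 * g x ^ 2) :=
    i1.add i2
  have i5 : Integrable (fun x : R4 => g x ^ 2 + 2 * (g x * ‖f x‖ ^ 2)) := hg2.add i4
  have hEZ : EZ f g = 1/2 * A + 1/4 * B + 1/2 * C := by
    have e : EZ f g = ∫ x : R4, (1/2 * ‖fderiv ℝ f x‖ ^ 2 + 1/4 * g x ^ 2)
        + 1/2 * (g x * ‖f x‖ ^ 2) := by
      rw [EZ]; congr 1; funext x; ring
    rw [e, integral_add i12 i3, integral_add i1 i2,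
      integral_const_mul, integral_const_mul, integral_const_mul]
  have hBCD : 0 ≤ B + 2 * C + D := by
    have h1 : 0 ≤ ∫ x : R4, (g x + ‖f x‖ ^ 2) ^ 2 :=
      integral_nonneg fun x => by positivity
    have h2 : (∫ x : R4, (g x + ‖f x‖ ^ 2) ^ 2)
        = ∫ x : R4, (g x ^ 2 + 2 * (g x * ‖f x‖ ^ 2)) + ‖f x‖ ^ 4 := by
      congr 1; funext x; ring
    rw [h2, integral_add i5 hf4, integral_add hg2 i4, integral_const_mul] at h1
    linarith
  have hL4sq : L4norm f ^ 2 * L4norm f ^ 2 = D := by rw [← hL4]; ring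
  have hDA : D ≤ Qn⁻¹ * A * (Qn⁻¹ * A) := by
    rw [← hL4sq]
    have h := mul_le_mul hSob hSob (sq_nonneg _) (by positivity)
    rwa [hH1] at h
  have hAQ : A ≤ Qn ^ 2 := by
    rw [← hH1]; exact pow_le_pow_left₀ (Real.sqrt_nonneg _) hfQ 2
  have hQ2 : 0 < Qn ^ 2 := by positivity
  have hDA' : Qn ^ 2 * D ≤ A ^ 2 := by
    have h := mul_le_mul_of_nonneg_left hDA (le_of_lt hQ2)
    have h2 : Qn ^ 2 * (Qn⁻¹ * A * (Qn⁻¹ * A)) = A ^ 2 := by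
      field_simp
    linarith [h2 ▸ h]
  have hden : 0 < 2 * Qn ^ 2 - 4 * EZ f g := by nlinarith
  rw [hH1, div_mul_eq_mul_div, le_div_iff₀ hden]
  have hkey : Qn ^ 2 * (4 * EZ f g) ≥ Qn ^ 2 * (2 * A) - A ^ 2 := by
    have h1 : 4 * EZ f g ≥ 2 * A - D := by rw [hEZ]; linarith
    nlinarith [mul_le_mul_of_nonneg_left h1 (le_of_lt hQ2)]
  have hA2 : A ^ 2 ≤ Qn ^ 2 * A := by nlinarith
  have hE4A : A ≤ 4 * EZ f g := le_of_mul_le_mul_left (by nlinarith) hQ2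
  nlinarith [mul_le_mul_of_nonneg_left hE4A hA0, hkey]
end
end

section
/- For f \in \dot H^1(\mathbb{R}^4) with 4\mathcal{E}_{NLS}(f) < \|Q\|_{\dot H^1}^2, the following are equivalent: (a) \mathcal{K}(f) > 0, (b) 0 < \|f\|_{L^4} < \|Q\|_{L^4}, (c) 0 < \|f\|_{\dot H^1} < \|Q\|_{\dot H^1}, (d) \|f\|_{\dot H^1}^2 < 4\mathcal{E}_{NLS}(f). -/
open MeasureTheory

noncomputable section

/-- The NLS energy. -/
def ENLS (f : R4 → ℂ) : ℝ :=
  ∫ x : R4, ((1 / 2) * ‖fderiv ℝ f x‖ ^ 2 - (1 / 4) * ‖f x‖ ^ 4)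

/-- The functional K(f) = ‖f‖_{Ḣ¹}² - ‖f‖_{L⁴}⁴. -/
def Kfun (f : R4 → ℂ) : ℝ := H1norm f ^ 2 - L4norm f ^ 4


lemma fderiv_zero_of_ae_zero (f : R4 → ℂ) (h : ∀ᵐ x : R4, f x = 0) (x : R4) :
    fderiv ℝ f x = 0 := by
  by_cases hd : DifferentiableAt ℝ f x
  swap
  · exact fderiv_zero_of_not_differentiableAt hd
  have hZ : Dense {y : R4 | f y = 0} := MeasureTheory.Measure.dense_of_ae h
  have hfx : f x = 0 := by
    have hx : x ∈ closure {y : R4 | f y = 0} := by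
      rw [hZ.closure_eq]; trivial
    rcases mem_closure_iff_seq_limit.mp hx with ⟨u, hu, hlim⟩
    have : Filter.Tendsto (fun n => f (u n)) Filter.atTop (nhds (f x)) :=
      (hd.continuousAt.tendsto).comp hlim
    have h0 : Filter.Tendsto (fun n => f (u n)) Filter.atTop (nhds 0) := by
      simp only [funext fun n => hu n]
      exact tendsto_const_nhds
    exact tendsto_nhds_unique this h0
  set D := fderiv ℝ f x with hDdef
  have hlo := hd.hasFDerivAt.isLittleO
  have key : ∀ ε : ℝ, 0 < ε → ∀ w : R4, ‖D w‖ ≤ ε * ‖w‖ := by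
    intro ε hε w
    have hev := hlo.def hε
    rcases Metric.eventually_nhds_iff_ball.mp hev with ⟨r, hr, hball⟩
    have hsub : Metric.ball x r ⊆ {y : R4 | ‖D (y - x)‖ ≤ ε * ‖y - x‖} := by
      have hclosed : IsClosed {y : R4 | ‖D (y - x)‖ ≤ ε * ‖y - x‖} := by
        apply isClosed_le
        · exact (D.continuous.comp (continuous_id.sub continuous_const)).norm
        · exact (continuous_const.mul (continuous_id.sub continuous_const).norm)
      have h1 : Metric.ball x r ∩ {y : R4 | f y = 0} ⊆
          {y : R4 | ‖D (y - x)‖ ≤ ε * ‖y - x‖} := by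
        intro y ⟨hy1, hy2⟩
        have h2 := hball y hy1
        rw [hy2, hfx] at h2
        simp only [sub_zero, zero_sub, norm_neg] at h2
        exact h2
      calc Metric.ball x r ⊆ closure (Metric.ball x r ∩ {y : R4 | f y = 0}) :=
            hZ.open_subset_closure_inter Metric.isOpen_ball
        _ ⊆ closure {y : R4 | ‖D (y - x)‖ ≤ ε * ‖y - x‖} := closure_mono h1
        _ = _ := hclosed.closure_eq
    rcases eq_or_ne w 0 with rfl | hw
    · simp
    have hwn : 0 < ‖w‖ := norm_pos_iff.mpr hw
    set c : ℝ := r / (2 * ‖w‖) with hc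
    have hcpos : 0 < c := by positivity
    have hy : x + c • w ∈ Metric.ball x r := by
      rw [Metric.mem_ball, dist_eq_norm]
      have : ‖x + c • w - x‖ = c * ‖w‖ := by
        rw [add_sub_cancel_left, norm_smul, Real.norm_eq_abs, abs_of_pos hcpos]
      have hcw : c * ‖w‖ = r / 2 := by
        rw [hc]; field_simp
      rw [this, hcw]; linarith
    have := hsub hy
    simp only [Set.mem_setOf_eq, add_sub_cancel_left] at this
    rw [D.map_smul, norm_smul, norm_smul, Real.norm_eq_abs, abs_of_pos hcpos] at this
    exact (mul_le_mul_iff_right₀ hcpos).mp (by linarith : c * ‖D w‖ ≤ c * (ε * ‖w‖))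
  have hD0 : ∀ w : R4, D w = 0 := by
    intro w
    rw [← norm_eq_zero]
    by_contra hne
    have hpos : 0 < ‖D w‖ := lt_of_le_of_ne (norm_nonneg _) (Ne.symm hne)
    have hwn : 0 < ‖w‖ := by
      by_contra hw
      push_neg at hw
      have : w = 0 := norm_le_zero_iff.mp hw
      simp [this] at hpos
    have := key (‖D w‖ / (2 * ‖w‖)) (by positivity) w
    have h2 : ‖D w‖ / (2 * ‖w‖) * ‖w‖ = ‖D w‖ / 2 := by field_simp
    rw [h2] at this
    linarith
  exact ContinuousLinearMap.ext hD0

set_option maxHeartbeats 1000000 in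
/-- Characterisation of the ground state condition for the NLS energy: below the ground
state energy the conditions (a) K(f) > 0, (b) 0 < ‖f‖_{L⁴} < ‖Q‖_{L⁴},
(c) 0 < ‖f‖_{Ḣ¹} < ‖Q‖_{Ḣ¹}, (d) ‖f‖_{Ḣ¹}² < 4 E_NLS(f) are equivalent.
Here Qn = ‖Q‖_{Ḣ¹} and QL4 = ‖Q‖_{L⁴}, related by ‖Q‖_{L⁴}² = ‖Q‖_{Ḣ¹}. -/
theorem ground_state_characterisation (f : R4 → ℂ) (Qn QL4 : ℝ)
    (hQn : 0 < Qn) (hQL4 : 0 < QL4) (hQ : QL4 ^ 2 = Qn)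
    (hf1 : Integrable (fun x : R4 => ‖fderiv ℝ f x‖ ^ 2))
    (hf4 : Integrable (fun x : R4 => ‖f x‖ ^ 4))
    (hSob : L4norm f ^ 2 ≤ Qn⁻¹ * H1norm f ^ 2)
    (hE : 4 * ENLS f < Qn ^ 2) :
    (0 < Kfun f ↔ (0 < L4norm f ∧ L4norm f < QL4)) ∧
      (0 < Kfun f ↔ (0 < H1norm f ∧ H1norm f < Qn)) ∧
      (0 < Kfun f ↔ H1norm f ^ 2 < 4 * ENLS f) := by
  set A := ∫ x : R4, ‖fderiv ℝ f x‖ ^ 2 with hAdef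
  set B := ∫ x : R4, ‖f x‖ ^ 4 with hBdef
  have hA0 : 0 ≤ A := integral_nonneg fun x => by positivity
  have hB0 : 0 ≤ B := integral_nonneg fun x => by positivity
  set L := L4norm f with hLdef
  set H := H1norm f with hHdef
  have hHn : 0 ≤ H := Real.sqrt_nonneg _
  have hLn : 0 ≤ L := Real.rpow_nonneg hB0 _
  have hH : H ^ 2 = A := Real.sq_sqrt hA0
  have hL : L ^ 4 = B := by
    rw [hLdef, L4norm, ← Real.rpow_natCast (B ^ _) 4, ← Real.rpow_mul hB0]
    norm_num
  have hEN : ENLS f = (1 / 2) * A - (1 / 4) * B := by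
    rw [ENLS, integral_sub (hf1.const_mul (1 / 2)) (hf4.const_mul (1 / 4)),
      integral_const_mul, integral_const_mul]
  have hE2 : 2 * A - B < Qn ^ 2 := by rw [hEN] at hE; linarith
  have hK : Kfun f = A - B := by rw [Kfun, ← hHdef, ← hLdef, hH, hL]
  have hs' : Qn * L ^ 2 ≤ A := by
    have h := mul_le_mul_of_nonneg_left hSob hQn.le
    rwa [← mul_assoc, mul_inv_cancel₀ hQn.ne', one_mul, hH] at h
  -- K > 0 implies L > 0 (via the a.e. vanishing argument)
  have hLpos : 0 < Kfun f → 0 < L := by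
    intro hk
    rcases hLn.lt_or_eq with h | h
    · exact h
    exfalso
    have hB : B = 0 := by rw [← hL, ← h]; ring
    have hae : ∀ᵐ x : R4, f x = 0 := by
      have h0 : (fun x : R4 => ‖f x‖ ^ 4) =ᵐ[volume] 0 :=
        (integral_eq_zero_iff_of_nonneg (fun x => by positivity) hf4).mp hB
      filter_upwards [h0] with x hx
      have : ‖f x‖ ^ 4 = 0 := hx
      have : ‖f x‖ = 0 := by
        nlinarith [norm_nonneg (f x), pow_eq_zero_iff (n := 4) (by norm_num) |>.mp this]
      exact norm_eq_zero.mp this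
    have hA : A = 0 := by
      rw [hAdef]
      have : ∀ x : R4, ‖fderiv ℝ f x‖ ^ 2 = 0 := fun x => by
        rw [fderiv_zero_of_ae_zero f hae x]; simp
      simp [this]
    rw [hK, hA, hB] at hk
    linarith
  have hAlt : 0 < Kfun f → A < Qn ^ 2 := by
    intro hk; rw [hK] at hk; linarith
  clear_value A B L H
  refine ⟨⟨fun hk => ?_, fun ⟨h1, h2⟩ => ?_⟩, ⟨fun hk => ?_, fun ⟨h1, h2⟩ => ?_⟩,
    ⟨fun hk => ?_, fun hk => ?_⟩⟩
  · refine ⟨hLpos hk, ?_⟩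
    have hA' := hAlt hk
    have : Qn * L ^ 2 < Qn * Qn := by nlinarith
    have hLsq : L ^ 2 < QL4 ^ 2 := by
      rw [hQ]
      exact lt_of_mul_lt_mul_left (by nlinarith) hQn.le
    exact lt_of_pow_lt_pow_left₀ 2 hQL4.le hLsq
  · -- 0 < L, L < QL4 imply K > 0
    rw [hK]
    have hLsq : L ^ 2 < Qn := by
      rw [← hQ]; exact pow_lt_pow_left₀ h2 hLn (by norm_num)
    have hBe : B = L ^ 2 * L ^ 2 := by rw [← hL]; ring
    nlinarith [mul_pos (mul_pos (pow_pos h1 2) hQn) (sub_pos.mpr hLsq)]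
  · have hA' := hAlt hk
    have hApos : 0 < A := by rw [hK] at hk; linarith
    refine ⟨by nlinarith, ?_⟩
    have : H ^ 2 < Qn ^ 2 := by rw [hH]; exact hA'
    exact lt_of_pow_lt_pow_left₀ 2 hQn.le this
  · rw [hK]
    have hApos : 0 < A := by rw [← hH]; exact pow_pos h1 2
    have hA' : A < Qn ^ 2 := by rw [← hH]; exact pow_lt_pow_left₀ h2 hHn (by norm_num)
    have hBe : B = L ^ 2 * L ^ 2 := by rw [← hL]; ring
    have h1' : Qn ^ 2 * B ≤ A ^ 2 := by nlinarith [mul_le_mul hs' hs' (by positivity) hA0]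
    nlinarith
  · rw [hH, hEN]; rw [hK] at hk; linarith
  · rw [hH, hEN] at hk; rw [hK]; linarith
end
end

section
/- For f \in \dot H^1(\mathbb{R}^4) with 4\mathcal{E}_{NLS}(f) < \|Q\|_{\dot H^1}^2, one has \mathcal{K}(f) = 0 if and only if f = 0. -/
open MeasureTheory

noncomputable section

section Aux

open Filter Topology

/-- Any ball meets a full-measure set. -/
lemma aux_ball_meets {s : Set R4} (hs : volume sᶜ = 0) (z : R4) {r : ℝ} (hr : 0 < r) :
    (s ∩ Metric.ball z r).Nonempty := by
  by_contra h
  rw [Set.not_nonempty_iff_eq_empty] at h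
  have hb : Metric.ball z r ⊆ sᶜ := by
    intro y hy hys
    exact Set.eq_empty_iff_forall_notMem.mp h y ⟨hys, hy⟩
  exact absurd (measure_mono_null hb hs) (Metric.measure_ball_pos volume z hr).ne'

/-- If `f = 0` a.e., then the (junk-valued) Fréchet derivative is `0` everywhere. -/
lemma aux_fderiv_eq_zero_of_ae_zero {f : R4 → ℂ} (hf : f =ᵐ[volume] (0 : R4 → ℂ)) (x : R4) :
    fderiv ℝ f x = 0 := by
  by_cases hd : DifferentiableAt ℝ f x
  · set s : Set R4 := {y | f y = 0} with hs_def
    have hs : volume sᶜ = 0 := by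
      have := (ae_iff).mp hf
      simpa [hs_def, Set.compl_setOf] using this
    have hclos : x ∈ closure s := by
      rw [Metric.mem_closure_iff]
      intro ε hε
      obtain ⟨y, hy, hyb⟩ := aux_ball_meets hs x hε
      exact ⟨y, hy, by simpa [dist_comm] using hyb⟩
    have hne : (𝓝[s] x).NeBot := mem_closure_iff_nhdsWithin_neBot.mp hclos
    have fx0 : f x = 0 := by
      have hc : Tendsto f (𝓝[s] x) (𝓝 (f x)) :=
        (hd.continuousAt.continuousWithinAt (s := s)).tendsto
      have h0 : Tendsto f (𝓝[s] x) (𝓝 0) := by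
        refine Tendsto.congr' ?_ tendsto_const_nhds
        exact eventually_nhdsWithin_of_forall (fun y hy => (hy : f y = 0).symm)
      exact tendsto_nhds_unique hc h0
    have htc : ∀ y : R4, y ∈ tangentConeAt ℝ s x := by
      intro y
      have hball : ∀ n : ℕ, (s ∩ Metric.ball (x + ((n : ℝ) + 1)⁻¹ • y)
          (((n : ℝ) + 1)⁻¹ * ((n : ℝ) + 1)⁻¹)).Nonempty := by
        intro n
        have hpos : (0 : ℝ) < ((n : ℝ) + 1)⁻¹ * ((n : ℝ) + 1)⁻¹ := by positivity
        exact aux_ball_meets hs _ hpos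
      choose p hp1 hp2 using hball
      refine mem_tangentConeAt_of_seq atTop (fun n : ℕ => (n : ℝ) + 1) (fun n => p n - x) ?_ ?_ ?_
      swap
      · filter_upwards with n
        simpa using hp1 n
      · apply squeeze_zero_norm (a := fun n : ℕ => ((n : ℝ) + 1)⁻¹ * ((n : ℝ) + 1)⁻¹ + ((n : ℝ) + 1)⁻¹ * ‖y‖)
        · intro n
          have h1 := (Metric.mem_ball.mp (hp2 n)).le
          rw [dist_eq_norm] at h1
          calc ‖p n - x‖ = ‖(p n - (x + ((n : ℝ) + 1)⁻¹ • y)) + ((n : ℝ) + 1)⁻¹ • y‖ := by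
                congr 1; abel
            _ ≤ ‖p n - (x + ((n : ℝ) + 1)⁻¹ • y)‖ + ‖((n : ℝ) + 1)⁻¹ • y‖ := norm_add_le _ _
            _ ≤ _ := by rw [norm_smul, Real.norm_of_nonneg (by positivity)]; linarith
        · have hc : Tendsto (fun n : ℕ => ((n : ℝ) + 1)⁻¹) atTop (𝓝 0) := by
            simpa [one_div] using tendsto_one_div_add_atTop_nhds_zero_nat (𝕜 := ℝ)
          simpa using (hc.mul hc).add (hc.mul_const ‖y‖)
      · rw [← tendsto_sub_nhds_zero_iff]
        apply squeeze_zero_norm (a := fun n : ℕ => ((n : ℝ) + 1)⁻¹)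
        · intro n
          have hn : ((n : ℝ) + 1) ≠ 0 := by positivity
          have hdist : ‖p n - x - ((n : ℝ) + 1)⁻¹ • y‖ ≤ ((n : ℝ) + 1)⁻¹ * ((n : ℝ) + 1)⁻¹ := by
            have := (Metric.mem_ball.mp (hp2 n)).le
            rw [dist_eq_norm] at this
            calc ‖p n - x - ((n : ℝ) + 1)⁻¹ • y‖ = ‖p n - (x + ((n : ℝ) + 1)⁻¹ • y)‖ := by
                  congr 1; abel
              _ ≤ _ := this
          have heq : ((n : ℝ) + 1) • (p n - x) - y
              = ((n : ℝ) + 1) • (p n - x - ((n : ℝ) + 1)⁻¹ • y) := by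
            rw [smul_sub, smul_sub, smul_inv_smul₀ hn, smul_sub]
          rw [heq, norm_smul, Real.norm_of_nonneg (by positivity)]
          calc ((n : ℝ) + 1) * ‖p n - x - ((n : ℝ) + 1)⁻¹ • y‖
              ≤ ((n : ℝ) + 1) * (((n : ℝ) + 1)⁻¹ * ((n : ℝ) + 1)⁻¹) := by
                apply mul_le_mul_of_nonneg_left hdist (by positivity)
            _ = ((n : ℝ) + 1)⁻¹ := by field_simp
        · simpa [one_div] using tendsto_one_div_add_atTop_nhds_zero_nat (𝕜 := ℝ)
    have hud : UniqueDiffWithinAt ℝ s x := by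
      refine ⟨?_, hclos⟩
      have : tangentConeAt ℝ s x = Set.univ := Set.eq_univ_of_forall htc
      rw [this, Submodule.span_univ]
      simp [dense_univ]
    have h1 : HasFDerivWithinAt f (fderiv ℝ f x) s x := hd.hasFDerivAt.hasFDerivWithinAt
    have h2 : HasFDerivWithinAt f 0 s x :=
      (hasFDerivWithinAt_const (𝕜 := ℝ) (0 : ℂ) x s).congr (fun y hy => hy) fx0
    exact hud.eq h1 h2
  · exact fderiv_zero_of_not_differentiableAt hd

end Aux

/-- Below the ground state energy, K(f) = 0 if and only if f = 0. -/
theorem K_zero_iff_zero (f : R4 → ℂ) (Qn : ℝ) (hQn : 0 < Qn)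
    (hf1 : Integrable (fun x : R4 => ‖fderiv ℝ f x‖ ^ 2))
    (hf4 : Integrable (fun x : R4 => ‖f x‖ ^ 4))
    (hSob : L4norm f ^ 2 ≤ Qn⁻¹ * H1norm f ^ 2)
    (hE : 4 * ENLS f < Qn ^ 2) :
    Kfun f = 0 ↔ f =ᵐ[volume] 0 := by
  set A := ∫ x : R4, ‖fderiv ℝ f x‖ ^ 2 with hA_def
  set B := ∫ x : R4, ‖f x‖ ^ 4 with hB_def
  have hA0 : 0 ≤ A := integral_nonneg fun x => by positivity
  have hB0 : 0 ≤ B := integral_nonneg fun x => by positivity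
  have hH : H1norm f ^ 2 = A := Real.sq_sqrt hA0
  have hL : L4norm f ^ 4 = B := by
    rw [L4norm, ← Real.rpow_natCast (_ ^ _) 4, ← Real.rpow_mul hB0]
    norm_num
  have hL2 : L4norm f ^ 2 = Real.sqrt B := by
    rw [L4norm, ← Real.rpow_natCast (_ ^ _) 2, ← Real.rpow_mul hB0,
      Real.sqrt_eq_rpow]
    norm_num
  have hKeq : Kfun f = A - B := by rw [Kfun, hH, hL]
  have hEeq : ENLS f = (1 / 2) * A - (1 / 4) * B := by
    rw [ENLS, integral_sub (hf1.const_mul _) (hf4.const_mul _),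
      integral_const_mul, integral_const_mul]
  constructor
  · intro hK0
    have hAB : A = B := by rw [hKeq] at hK0; linarith
    have hE' : A < Qn ^ 2 := by rw [hEeq] at hE; linarith
    have hsob : Real.sqrt B ≤ Qn⁻¹ * B := by
      rw [hL2, hH, hAB] at hSob; exact hSob
    have hBzero : B = 0 := by
      by_contra hBne
      have hBpos : 0 < B := lt_of_le_of_ne hB0 (Ne.symm hBne)
      have hsB : 0 < Real.sqrt B := Real.sqrt_pos.mpr hBpos
      have h1 : Qn * Real.sqrt B ≤ Qn * (Qn⁻¹ * B) :=
        mul_le_mul_of_nonneg_left hsob hQn.le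
      have h2 : Qn * (Qn⁻¹ * B) = B := by field_simp
      have h3 : Real.sqrt B * Real.sqrt B = B := Real.mul_self_sqrt hB0
      have h4 : Qn ≤ Real.sqrt B := by
        have := h1.trans_eq h2
        nlinarith
      nlinarith
    have hBint : (fun x : R4 => ‖f x‖ ^ 4) =ᵐ[volume] 0 := by
      rw [← integral_eq_zero_iff_of_nonneg (fun x => by positivity) hf4]
      exact hBzero
    filter_upwards [hBint] with x hx
    have : ‖f x‖ ^ 4 = 0 := hx
    have : ‖f x‖ = 0 := by
      have h4 : (4 : ℕ) ≠ 0 := by norm_num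
      exact pow_eq_zero_iff h4 |>.mp this
    simpa using norm_eq_zero.mp this
  · intro hf0
    have hB : B = 0 := by
      have h : (fun x : R4 => ‖f x‖ ^ 4) =ᵐ[volume] (fun _ => (0 : ℝ)) := by
        filter_upwards [hf0] with x hx
        simp [hx]
      rw [hB_def, integral_congr_ae h, integral_zero]
    have hA : A = 0 := by
      have h : (fun x : R4 => ‖fderiv ℝ f x‖ ^ 2) = fun _ => (0 : ℝ) := by
        funext x
        rw [aux_fderiv_eq_zero_of_ae_zero hf0 x]
        simp
      rw [hA_def, h, integral_zero]
    rw [hKeq, hA, hB, sub_zero]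
end
end

section
/- For f \in \dot H^1(\mathbb{R}^4) and g \in L^2(\mathbb{R}^4), the map \lambda \mapsto \mathcal{E}_Z(\lambda f, \lambda^2 g) is differentiable on (0,\infty) with derivative \frac{d}{d\lambda}\mathcal{E}_Z(\lambda f, \lambda^2 g) = \lambda^{-1}\mathcal{K}(\lambda f) + \lambda^3\|g + |f|^2\|_{L^2}^2. -/
open MeasureTheory

noncomputable section

lemma fderiv_real_smul (f : R4 → ℂ) (t : ℝ) (x : R4) :
    fderiv ℝ (fun x => (t : ℂ) * f x) x = t • fderiv ℝ f x := by
  have hsmul : (fun x => (t : ℂ) * f x) = t • f := by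
    funext y; simp [Pi.smul_apply, Complex.real_smul]
  rcases eq_or_ne t 0 with rfl | ht
  · simp [hsmul]
    exact (zero_smul ℝ (fderiv ℝ f x)).symm
  by_cases hdf : DifferentiableAt ℝ f x
  · rw [hsmul]; exact fderiv_const_smul hdf t
  · rw [hsmul, fderiv_zero_of_not_differentiableAt, fderiv_zero_of_not_differentiableAt hdf]
    · ext y; simp
    intro h
    have h2 := h.const_smul t⁻¹
    apply hdf
    have he : (fun y => t⁻¹ • (t • f) y) = f := by
      funext y; simp only [Pi.smul_apply, smul_smul, inv_mul_cancel₀ ht, one_smul]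
    rwa [smul_smul, inv_mul_cancel₀ ht, one_smul] at h2

lemma norm_fderiv_real_smul (f : R4 → ℂ) (t : ℝ) (x : R4) :
    ‖fderiv ℝ (fun x => (t : ℂ) * f x) x‖ = |t| * ‖fderiv ℝ f x‖ := by
  rw [fderiv_real_smul]
  have := norm_smul t (fderiv ℝ f x)
  rwa [Real.norm_eq_abs] at this

/-- The map λ ↦ E_Z(λf, λ²g) is differentiable on (0,∞) with derivative
λ⁻¹ K(λf) + λ³ ‖g + |f|²‖_{L²}². -/
theorem energy_scaling_derivative (f : R4 → ℂ) (g : R4 → ℝ)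
    (hf1 : Integrable (fun x : R4 => ‖fderiv ℝ f x‖ ^ 2))
    (hf4 : Integrable (fun x : R4 => ‖f x‖ ^ 4))
    (hg2 : Integrable (fun x : R4 => g x ^ 2))
    (hfg : Integrable (fun x : R4 => g x * ‖f x‖ ^ 2)) :
    ∀ l : ℝ, 0 < l →
      HasDerivAt (fun t : ℝ => EZ (fun x => (t : ℂ) * f x) (fun x => t ^ 2 * g x))
        (l⁻¹ * Kfun (fun x => (l : ℂ) * f x) + l ^ 3 * ∫ x : R4, (g x + ‖f x‖ ^ 2) ^ 2)
        l := by
  intro l hl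
  set A := ∫ x : R4, ‖fderiv ℝ f x‖ ^ 2 with hA
  set B := ∫ x : R4, g x ^ 2 with hB
  set C := ∫ x : R4, g x * ‖f x‖ ^ 2 with hC
  set D := ∫ x : R4, ‖f x‖ ^ 4 with hD
  have hnormmul : ∀ (t : ℝ) (x : R4), ‖(t : ℂ) * f x‖ = |t| * ‖f x‖ := by
    intro t x; rw [norm_mul, Complex.norm_real, Real.norm_eq_abs]
  -- EZ scaling identity
  have hEZ : ∀ t : ℝ, EZ (fun x => (t : ℂ) * f x) (fun x => t ^ 2 * g x)
      = t ^ 2 * ((1 / 2) * A) + t ^ 4 * ((1 / 4) * B + (1 / 2) * C) := by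
    intro t
    have h1 : (fun x : R4 => (1 / 2) * ‖fderiv ℝ (fun x => (t : ℂ) * f x) x‖ ^ 2
        + (1 / 4) * (t ^ 2 * g x) ^ 2 + (1 / 2) * (t ^ 2 * g x) * ‖(t : ℂ) * f x‖ ^ 2)
        = fun x : R4 => (t ^ 2 * (1 / 2)) * ‖fderiv ℝ f x‖ ^ 2
          + ((t ^ 4 * (1 / 4)) * g x ^ 2 + (t ^ 4 * (1 / 2)) * (g x * ‖f x‖ ^ 2)) := by
      funext x
      rw [norm_fderiv_real_smul, hnormmul]
      simp only [mul_pow, sq_abs]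
      ring
    have I1 : Integrable (fun x : R4 => (t ^ 2 * (1 / 2)) * ‖fderiv ℝ f x‖ ^ 2) :=
      hf1.const_mul _
    have I2 : Integrable (fun x : R4 => (t ^ 4 * (1 / 4)) * g x ^ 2) := hg2.const_mul _
    have I3 : Integrable (fun x : R4 => (t ^ 4 * (1 / 2)) * (g x * ‖f x‖ ^ 2)) :=
      hfg.const_mul _
    have I23 : Integrable (fun x : R4 => (t ^ 4 * (1 / 4)) * g x ^ 2
        + (t ^ 4 * (1 / 2)) * (g x * ‖f x‖ ^ 2)) := I2.add I3
    rw [EZ, h1, integral_add I1 I23, integral_add I2 I3, integral_const_mul, integral_const_mul,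
      integral_const_mul]
    ring
  -- Kfun of scaled f
  have hAnn : 0 ≤ A := integral_nonneg fun x => by positivity
  have hDnn : 0 ≤ D := integral_nonneg fun x => by positivity
  have hK : Kfun (fun x => (l : ℂ) * f x) = l ^ 2 * A - l ^ 4 * D := by
    have h2 : (fun x : R4 => ‖fderiv ℝ (fun x => (l : ℂ) * f x) x‖ ^ 2)
        = fun x : R4 => l ^ 2 * ‖fderiv ℝ f x‖ ^ 2 := by
      funext x
      rw [norm_fderiv_real_smul, mul_pow, sq_abs]
    have h4 : (fun x : R4 => ‖(l : ℂ) * f x‖ ^ 4)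
        = fun x : R4 => l ^ 4 * ‖f x‖ ^ 4 := by
      funext x
      rw [hnormmul, abs_of_pos hl, mul_pow]
    have hnn : (0:ℝ) ≤ l ^ 4 * D := by positivity
    rw [Kfun, H1norm, L4norm, h2, h4, integral_const_mul, integral_const_mul,
      Real.sq_sqrt (by positivity), ← hA, ← hD,
      ← Real.rpow_natCast ((l ^ 4 * D) ^ ((4:ℝ)⁻¹)) 4, ← Real.rpow_mul hnn]
    norm_num
  -- expand the square integral
  have hsq : (∫ x : R4, (g x + ‖f x‖ ^ 2) ^ 2) = B + (2 * C + D) := by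
    have h3 : (fun x : R4 => (g x + ‖f x‖ ^ 2) ^ 2)
        = fun x : R4 => g x ^ 2 + (2 * (g x * ‖f x‖ ^ 2) + ‖f x‖ ^ 4) := by
      funext x; ring
    have J2 : Integrable (fun x : R4 => 2 * (g x * ‖f x‖ ^ 2)) := hfg.const_mul 2
    have J23 : Integrable (fun x : R4 => 2 * (g x * ‖f x‖ ^ 2) + ‖f x‖ ^ 4) := J2.add hf4
    rw [h3, integral_add hg2 J23, integral_add J2 hf4, integral_const_mul]
  have hP : HasDerivAt (fun t : ℝ => t ^ 2 * ((1 / 2) * A) + t ^ 4 * ((1 / 4) * B + (1 / 2) * C))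
      (2 * l * ((1 / 2) * A) + 4 * l ^ 3 * ((1 / 4) * B + (1 / 2) * C)) l := by
    have := ((hasDerivAt_pow 2 l).mul_const ((1 / 2) * A)).add
      ((hasDerivAt_pow 4 l).mul_const ((1 / 4) * B + (1 / 2) * C))
    exact this.congr_deriv (by norm_num)
  have hfun : (fun t : ℝ => EZ (fun x => (t : ℂ) * f x) (fun x => t ^ 2 * g x))
      = fun t : ℝ => t ^ 2 * ((1 / 2) * A) + t ^ 4 * ((1 / 4) * B + (1 / 2) * C) :=
    funext hEZ
  rw [hfun, hK, hsq]
  convert hP using 1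
  field_simp
  ring
end
end

section
/- Let X be a Banach space, u_0 \in X, and \mathcal{I}: X^3 \to X a symmetric trilinear map satisfying \|\mathcal{I}[u,v,w]\|_X \le C_0\|u\|_X\|v\|_X\|w\|_X. Define \rho(v) = \sup_{\|\phi\|_X \le 1} \|\mathcal{I}[\phi,\phi,v]\|_X restricted to diagonal arguments as needed. For every A > 0 there exists \epsilon > 0 (depending only on A and C_0) such that if \|u_0\|_X \le A and \rho(u_0)^{1/2}\cdot\|u_0\|_X^{1/2} \le \epsilon (in particular if \rho(u_0) \le \epsilon^2/A), then the equation u = u_0 + \mathcal{I}[u,u,u] has a solution u \in X with \|u - u_0\|_X \le C(A)\,\rho(u_0). -/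
noncomputable section

/-- The controlling quantity `ρ(v) = sup_{‖φ‖ ≤ 1} ‖I[φ, φ, v]‖`. -/
def rho {X : Type*} [NormedAddCommGroup X] [NormedSpace ℝ X]
    (T : X →L[ℝ] X →L[ℝ] X →L[ℝ] X) (v : X) : ℝ :=
  sSup {r : ℝ | ∃ φ : X, ‖φ‖ ≤ 1 ∧ r = ‖T φ φ v‖}

private lemma aux_RA (A ρ : ℝ) (hA : 0 < A) (hρ0 : 0 ≤ ρ) (h2 : 14*A*ρ ≤ 1) :
    14*A^2*ρ ≤ A := by nlinarith

private lemma aux_hc1 (C1 A : ℝ) (hA : 0 < A) (hC1ge1 : 1 ≤ C1) :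
    84 * A ≤ 1000 * C1 * (A+1)^3 := by
  nlinarith [mul_nonneg (sub_nonneg.2 hC1ge1) (pow_nonneg (by linarith : (0:ℝ) ≤ A+1) 3),
    pow_nonneg hA.le 3, sq_nonneg A]

private lemma aux_hc2 (C1 A : ℝ) (hA : 0 < A) (hC1pos : 0 < C1) :
    784 * C1 * A^3 ≤ 1000 * C1 * (A+1)^3 := by
  nlinarith [mul_nonneg hC1pos.le
    (by nlinarith [pow_nonneg hA.le 3, sq_nonneg A, hA] : (0:ℝ) ≤ 1000*(A+1)^3 - 784*A^3)]

private lemma aux_scal2 (C0 C1 A ρ : ℝ) (hA : 0 < A) (hρ0 : 0 ≤ ρ) (hC0C1 : C0 ≤ C1) :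
    126*C0*A^3*ρ ≤ 126*C1*A^3*ρ := by
  nlinarith [mul_nonneg (pow_nonneg hA.le 3) hρ0]

private lemma aux_b2 (ρ A x y : ℝ) (hρ0 : 0 ≤ ρ) (hx : 0 ≤ x) (hy0 : 0 ≤ y) (hyA : y ≤ A) :
    2*ρ*(x*y) ≤ 2*ρ*A*x := by nlinarith [mul_nonneg hρ0 hx]

private lemma aux_fin (ρ A R C0 nd : ℝ) (hscal : 6*ρ*A + 9*C0*A*R ≤ 1/2) (hnd : 0 ≤ nd) :
    2*ρ*A*nd + C0*nd*A*R + C0*nd*R*(2*A)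
    + (2*ρ*A*nd + C0*A*nd*R + C0*R*nd*(2*A))
    + (2*ρ*A*nd + C0*A*R*nd + C0*R*(2*A)*nd) ≤ (1/2)*nd := by nlinarith

set_option maxHeartbeats 1600000 in
/-- Controlling-quantity fixed point theorem: if `I` is a symmetric bounded trilinear
map on a Banach space `X` with `‖I[u,v,w]‖ ≤ C₀‖u‖‖v‖‖w‖`, then for every `A > 0`
there are `ε > 0` and `C > 0` (depending only on `A` and `C₀`) such that whenever
`‖u₀‖ ≤ A` and `ρ(u₀)^{1/2}‖u₀‖^{1/2} ≤ ε`, the equation `u = u₀ + I[u,u,u]` has a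
solution `u ∈ X` with `‖u - u₀‖ ≤ C ρ(u₀)`. -/
theorem controlling_quantity_fixed_point
    {X : Type*} [NormedAddCommGroup X] [NormedSpace ℝ X] [CompleteSpace X]
    (T : X →L[ℝ] X →L[ℝ] X →L[ℝ] X) (C0 : ℝ) (hC0 : 0 ≤ C0)
    (hbound : ∀ u v w : X, ‖T u v w‖ ≤ C0 * ‖u‖ * ‖v‖ * ‖w‖)
    (hsymm : ∀ u v w : X, T u v w = T v u w ∧ T u v w = T u w v) :
    ∀ A : ℝ, 0 < A → ∃ ε C : ℝ, 0 < ε ∧ 0 < C ∧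
      ∀ u0 : X, ‖u0‖ ≤ A → Real.sqrt (rho T u0) * Real.sqrt ‖u0‖ ≤ ε →
        ∃ u : X, u = u0 + T u u u ∧ ‖u - u0‖ ≤ C * rho T u0 := by
  intro A hA
  set C1 : ℝ := C0 + 1 with hC1def
  have hC1pos : 0 < C1 := by simp only [hC1def]; linarith
  have hC1ge1 : 1 ≤ C1 := by simp only [hC1def]; linarith
  have hC0C1 : C0 ≤ C1 := by simp only [hC1def]; linarith
  have hposB : (0:ℝ) < 1000 * C1 * (A+1)^3 := by
    have : (0:ℝ) < (A+1)^3 := by positivity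
    nlinarith
  set δ : ℝ := min (14*A)⁻¹ (1000*C1*(A+1)^3)⁻¹ with hδdef
  have hδpos : 0 < δ := lt_min (by positivity) (inv_pos.2 hposB)
  refine ⟨δ / Real.sqrt C1, 14*A^2, div_pos hδpos (Real.sqrt_pos.2 hC1pos), by positivity, ?_⟩
  intro u0 hu0 hsmall
  clear_value C1 δ
  set ρ : ℝ := rho T u0 with hρdef
  -- basic facts about ρ
  have hS0 : (0:ℝ) ∈ {r : ℝ | ∃ φ : X, ‖φ‖ ≤ 1 ∧ r = ‖T φ φ u0‖} :=
    ⟨0, by simp, by simp⟩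
  have hbdd : BddAbove {r : ℝ | ∃ φ : X, ‖φ‖ ≤ 1 ∧ r = ‖T φ φ u0‖} := by
    refine ⟨C0 * ‖u0‖, ?_⟩
    rintro r ⟨φ, hφ, rfl⟩
    have h1 := hbound φ φ u0
    nlinarith [norm_nonneg φ, norm_nonneg u0, mul_nonneg hC0 (norm_nonneg u0),
      mul_nonneg (mul_nonneg hC0 (norm_nonneg φ)) (norm_nonneg u0)]
  have hρ0 : 0 ≤ ρ := le_csSup hbdd hS0
  have hρleC : ρ ≤ C0 * ‖u0‖ := by
    refine csSup_le ⟨0, hS0⟩ ?_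
    rintro r ⟨φ, hφ, rfl⟩
    have h1 := hbound φ φ u0
    nlinarith [norm_nonneg φ, norm_nonneg u0, mul_nonneg hC0 (norm_nonneg u0),
      mul_nonneg (mul_nonneg hC0 (norm_nonneg φ)) (norm_nonneg u0)]
  have hmem : ∀ φ : X, ‖φ‖ ≤ 1 → ‖T φ φ u0‖ ≤ ρ := fun φ h => le_csSup hbdd ⟨φ, h, rfl⟩
  clear_value ρ
  -- diagonal bound
  have hdiag : ∀ χ : X, ‖T χ χ u0‖ ≤ ρ * ‖χ‖^2 := by
    intro χ
    rcases eq_or_ne χ 0 with h | h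
    · simp [h]
    · have hn : 0 < ‖χ‖ := norm_pos_iff.2 h
      have hφ1 : ‖(‖χ‖⁻¹ • χ)‖ = 1 := by
        rw [norm_smul, norm_inv, norm_norm, inv_mul_cancel₀ hn.ne']
      have h1 := hmem _ hφ1.le
      have key : T (‖χ‖⁻¹ • χ) (‖χ‖⁻¹ • χ) u0 = (‖χ‖⁻¹ * ‖χ‖⁻¹) • T χ χ u0 := by
        simp [smul_smul]
      rw [key, norm_smul, Real.norm_eq_abs, abs_of_nonneg (by positivity)] at h1
      have h2 := mul_le_mul_of_nonneg_left h1 (sq_nonneg ‖χ‖)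
      calc ‖T χ χ u0‖ = ‖χ‖^2 * (‖χ‖⁻¹ * ‖χ‖⁻¹ * ‖T χ χ u0‖) := by
            field_simp
        _ ≤ ‖χ‖^2 * ρ := h2
        _ = ρ * ‖χ‖^2 := by ring
  -- polarization
  have hpol : ∀ φ ψ : X, ‖T φ ψ u0‖ ≤ (ρ * ‖φ+ψ‖^2 + ρ * ‖φ-ψ‖^2)/4 := by
    intro φ ψ
    have hid : T (φ+ψ) (φ+ψ) u0 - T (φ-ψ) (φ-ψ) u0 = (4:ℝ) • T φ ψ u0 := by
      simp only [map_add, map_sub, ContinuousLinearMap.add_apply,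
        ContinuousLinearMap.sub_apply, (hsymm ψ φ u0).1]
      module
    have h4 : (4:ℝ) * ‖T φ ψ u0‖ = ‖T (φ+ψ) (φ+ψ) u0 - T (φ-ψ) (φ-ψ) u0‖ := by
      rw [hid, norm_smul, Real.norm_eq_abs, abs_of_nonneg (by norm_num : (0:ℝ) ≤ 4)]
    have h5 := norm_sub_le (T (φ+ψ) (φ+ψ) u0) (T (φ-ψ) (φ-ψ) u0)
    have d1 := hdiag (φ+ψ)
    have d2 := hdiag (φ-ψ)
    linarith
  -- off-diagonal bound with two slots
  have hb2 : ∀ φ ψ : X, ‖T φ ψ u0‖ ≤ 2 * ρ * (‖φ‖ * ‖ψ‖) := by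
    intro φ ψ
    rcases eq_or_ne φ 0 with h | hφ
    · simp [h]
    rcases eq_or_ne ψ 0 with h | hψ
    · simp [h]
    have hφp : 0 < ‖φ‖ := norm_pos_iff.2 hφ
    have hψp : 0 < ‖ψ‖ := norm_pos_iff.2 hψ
    set t : ℝ := Real.sqrt (‖ψ‖ / ‖φ‖) with htdef
    have htp : 0 < t := Real.sqrt_pos.2 (by positivity)
    set s : ℝ := Real.sqrt (‖φ‖ * ‖ψ‖) with hsdef
    have hs2 : s^2 = ‖φ‖ * ‖ψ‖ := Real.sq_sqrt (by positivity)
    have key : T (t • φ) (t⁻¹ • ψ) u0 = T φ ψ u0 := by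
      simp [smul_smul, inv_mul_cancel₀ htp.ne', mul_inv_cancel₀ htp.ne']
    have hnorm1 : ‖t • φ‖ = s := by
      rw [norm_smul, Real.norm_eq_abs, abs_of_pos htp, htdef, hsdef]
      rw [show ‖φ‖ = Real.sqrt (‖φ‖^2) from (Real.sqrt_sq hφp.le).symm,
        ← Real.sqrt_mul (by positivity)]
      congr 1
      field_simp
      ring
      exact (Real.sq_sqrt (by positivity)).symm
    have hnorm2 : ‖t⁻¹ • ψ‖ = s := by
      rw [norm_smul, Real.norm_eq_abs, abs_of_pos (inv_pos.2 htp), htdef, hsdef,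
        ← Real.sqrt_inv, inv_div]
      rw [show ‖ψ‖ = Real.sqrt (‖ψ‖^2) from (Real.sqrt_sq hψp.le).symm,
        ← Real.sqrt_mul (by positivity)]
      congr 1
      field_simp
      ring
      exact (Real.sq_sqrt (by positivity)).symm
    have hP := hpol (t • φ) (t⁻¹ • ψ)
    rw [key] at hP
    have n1 : ‖t • φ + t⁻¹ • ψ‖ ≤ 2*s := by
      have := norm_add_le (t • φ) (t⁻¹ • ψ); rw [hnorm1, hnorm2] at this; linarith
    have n2 : ‖t • φ - t⁻¹ • ψ‖ ≤ 2*s := by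
      have := norm_sub_le (t • φ) (t⁻¹ • ψ); rw [hnorm1, hnorm2] at this; linarith
    have m1 : ρ * ‖t • φ + t⁻¹ • ψ‖^2 ≤ ρ * (2*s)^2 :=
      mul_le_mul_of_nonneg_left (pow_le_pow_left₀ (norm_nonneg _) n1 2) hρ0
    have m2 : ρ * ‖t • φ - t⁻¹ • ψ‖^2 ≤ ρ * (2*s)^2 :=
      mul_le_mul_of_nonneg_left (pow_le_pow_left₀ (norm_nonneg _) n2 2) hρ0
    have hfin : ρ * (2*s)^2 = 4 * (ρ * (‖φ‖ * ‖ψ‖)) := by rw [← hs2]; ring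
    linarith
  -- smallness of ρ
  have hq : ρ * ‖u0‖ ≤ δ^2 / C1 := by
    have h1 : Real.sqrt (ρ * ‖u0‖) ≤ δ / Real.sqrt C1 := by
      rw [Real.sqrt_mul hρ0]; exact hsmall
    have h3 : (Real.sqrt (ρ * ‖u0‖))^2 ≤ (δ / Real.sqrt C1)^2 :=
      pow_le_pow_left₀ (Real.sqrt_nonneg _) h1 2
    rwa [Real.sq_sqrt (mul_nonneg hρ0 (norm_nonneg _)), div_pow,
      Real.sq_sqrt hC1pos.le] at h3
  have hρδ : ρ ≤ δ := by
    have h1 : ρ ≤ C1 * ‖u0‖ :=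
      hρleC.trans (mul_le_mul_of_nonneg_right hC0C1 (norm_nonneg u0))
    have h2 : ρ * ρ ≤ C1 * (ρ * ‖u0‖) := by
      have := mul_le_mul_of_nonneg_left h1 hρ0
      linarith
    have h3 : C1 * (ρ * ‖u0‖) ≤ δ^2 := by
      have := mul_le_mul_of_nonneg_left hq hC1pos.le
      calc C1 * (ρ * ‖u0‖) ≤ C1 * (δ^2 / C1) := this
        _ = δ^2 := by field_simp
    have h4 : ρ * ρ ≤ δ * δ := by linarith [h2, h3, sq_abs δ, sq_nonneg δ]
    have h5 := Real.sqrt_le_sqrt h4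
    rwa [Real.sqrt_mul_self hρ0, Real.sqrt_mul_self hδpos.le] at h5
  -- key numeric facts
  have hρC : 1000 * C1 * (A+1)^3 * ρ ≤ 1 := by
    have h1 : ρ ≤ (1000 * C1 * (A+1)^3)⁻¹ :=
      hρδ.trans (by rw [hδdef]; exact min_le_right _ _)
    have h2 := mul_le_mul_of_nonneg_left h1 hposB.le
    rwa [mul_inv_cancel₀ hposB.ne'] at h2
  set R : ℝ := 14 * A^2 * ρ with hRdef
  clear_value R
  have hR0 : 0 ≤ R := by
    rw [hRdef]; exact mul_nonneg (by positivity) hρ0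
  have hRA : R ≤ A := by
    have h1 : ρ ≤ (14*A)⁻¹ :=
      hρδ.trans (by rw [hδdef]; exact min_le_left _ _)
    have h2 := mul_le_mul_of_nonneg_left h1 (by positivity : (0:ℝ) ≤ 14*A)
    rw [mul_inv_cancel₀ (by positivity : (14*A) ≠ 0)] at h2
    rw [hRdef]; exact aux_RA A ρ hA hρ0 h2
  have h84 : 84 * A * ρ ≤ 1 := by
    have hc : 84 * A ≤ 1000 * C1 * (A+1)^3 := aux_hc1 C1 A hA hC1ge1
    calc 84 * A * ρ ≤ 1000 * C1 * (A+1)^3 * ρ :=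
          mul_le_mul_of_nonneg_right hc hρ0
      _ ≤ 1 := hρC
  have h784 : 784 * C1 * A^3 * ρ ≤ 1 := by
    have hc : 784 * C1 * A^3 ≤ 1000 * C1 * (A+1)^3 := aux_hc2 C1 A hA hC1pos
    calc 784 * C1 * A^3 * ρ ≤ 1000 * C1 * (A+1)^3 * ρ :=
          mul_le_mul_of_nonneg_right hc hρ0
      _ ≤ 1 := hρC
  have hscal : 6*ρ*A + 9*C0*A*R ≤ 1/2 := by
    have h1 : 9*C0*A*R = 126*C0*A^3*ρ := by rw [hRdef]; ring
    have h2 : 126*C0*A^3*ρ ≤ 126*C1*A^3*ρ := aux_scal2 C0 C1 A ρ hA hρ0 hC0C1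
    linarith
  -- monotone trilinear bound
  have hmono : ∀ u v w : X, ∀ p q r : ℝ, ‖u‖ ≤ p → ‖v‖ ≤ q → ‖w‖ ≤ r →
      ‖T u v w‖ ≤ C0 * p * q * r := by
    intro u v w p q r hu hv hw
    refine (hbound u v w).trans ?_
    have h0u := norm_nonneg u; have h0v := norm_nonneg v; have h0w := norm_nonneg w
    have hp : 0 ≤ p := h0u.trans hu
    have hq' : 0 ≤ q := h0v.trans hv
    have s1 : C0*‖u‖ ≤ C0*p := mul_le_mul_of_nonneg_left hu hC0
    have s2 : C0*‖u‖*‖v‖ ≤ C0*p*q := mul_le_mul s1 hv h0v (mul_nonneg hC0 hp)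
    exact mul_le_mul s2 hw h0w (mul_nonneg (mul_nonneg hC0 hp) hq')
  have hb2' : ∀ φ : X, ‖T φ u0 u0‖ ≤ 2*ρ*A*‖φ‖ := by
    intro φ
    exact (hb2 φ u0).trans (aux_b2 ρ A ‖φ‖ ‖u0‖ hρ0 (norm_nonneg φ) (norm_nonneg u0) hu0)
  -- the iteration map
  set Φ : X → X := fun h => T (u0+h) (u0+h) (u0+h) with hΦdef
  clear_value Φ
  -- Lipschitz estimate on the ball
  have hlip : ∀ h₁ h₂ : X, ‖h₁‖ ≤ R → ‖h₂‖ ≤ R →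
      ‖Φ h₁ - Φ h₂‖ ≤ (1/2) * ‖h₁ - h₂‖ := by
    intro h₁ h₂ hh₁ hh₂
    have hna : ‖u0 + h₁‖ ≤ 2*A := (norm_add_le _ _).trans (by linarith)
    have hnb : ‖u0 + h₂‖ ≤ 2*A := (norm_add_le _ _).trans (by linarith)
    have hsplit : Φ h₁ - Φ h₂ =
        T (h₁-h₂) u0 u0 + T (h₁-h₂) u0 h₁ + T (h₁-h₂) h₁ (u0+h₁)
        + (T u0 (h₁-h₂) u0 + T u0 (h₁-h₂) h₁ + T h₂ (h₁-h₂) (u0+h₁))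
        + (T u0 u0 (h₁-h₂) + T u0 h₂ (h₁-h₂) + T h₂ (u0+h₂) (h₁-h₂)) := by
      simp only [hΦdef]
      simp only [map_add, map_sub, ContinuousLinearMap.add_apply,
        ContinuousLinearMap.sub_apply]
      abel
    have m1 : ‖T (h₁-h₂) u0 u0‖ ≤ 2*ρ*A*‖h₁-h₂‖ := hb2' _
    have m2 : ‖T (h₁-h₂) u0 h₁‖ ≤ C0*‖h₁-h₂‖*A*R := hmono _ _ _ _ _ _ le_rfl hu0 hh₁
    have m3 : ‖T (h₁-h₂) h₁ (u0+h₁)‖ ≤ C0*‖h₁-h₂‖*R*(2*A) :=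
      hmono _ _ _ _ _ _ le_rfl hh₁ hna
    have m4 : ‖T u0 (h₁-h₂) u0‖ ≤ 2*ρ*A*‖h₁-h₂‖ := by
      rw [(hsymm u0 (h₁-h₂) u0).1]; exact hb2' _
    have m5 : ‖T u0 (h₁-h₂) h₁‖ ≤ C0*A*‖h₁-h₂‖*R := hmono _ _ _ _ _ _ hu0 le_rfl hh₁
    have m6 : ‖T h₂ (h₁-h₂) (u0+h₁)‖ ≤ C0*R*‖h₁-h₂‖*(2*A) :=
      hmono _ _ _ _ _ _ hh₂ le_rfl hna
    have m7 : ‖T u0 u0 (h₁-h₂)‖ ≤ 2*ρ*A*‖h₁-h₂‖ := by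
      rw [(hsymm u0 u0 (h₁-h₂)).2, (hsymm u0 (h₁-h₂) u0).1]; exact hb2' _
    have m8 : ‖T u0 h₂ (h₁-h₂)‖ ≤ C0*A*R*‖h₁-h₂‖ := hmono _ _ _ _ _ _ hu0 hh₂ le_rfl
    have m9 : ‖T h₂ (u0+h₂) (h₁-h₂)‖ ≤ C0*R*(2*A)*‖h₁-h₂‖ :=
      hmono _ _ _ _ _ _ hh₂ hnb le_rfl
    calc ‖Φ h₁ - Φ h₂‖
        ≤ ‖T (h₁-h₂) u0 u0 + T (h₁-h₂) u0 h₁ + T (h₁-h₂) h₁ (u0+h₁)‖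
          + ‖T u0 (h₁-h₂) u0 + T u0 (h₁-h₂) h₁ + T h₂ (h₁-h₂) (u0+h₁)‖
          + ‖T u0 u0 (h₁-h₂) + T u0 h₂ (h₁-h₂) + T h₂ (u0+h₂) (h₁-h₂)‖ := by
          rw [hsplit]; exact norm_add₃_le
      _ ≤ (‖T (h₁-h₂) u0 u0‖ + ‖T (h₁-h₂) u0 h₁‖ + ‖T (h₁-h₂) h₁ (u0+h₁)‖)
          + (‖T u0 (h₁-h₂) u0‖ + ‖T u0 (h₁-h₂) h₁‖ + ‖T h₂ (h₁-h₂) (u0+h₁)‖)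
          + (‖T u0 u0 (h₁-h₂)‖ + ‖T u0 h₂ (h₁-h₂)‖ + ‖T h₂ (u0+h₂) (h₁-h₂)‖) :=
          add_le_add (add_le_add norm_add₃_le norm_add₃_le) norm_add₃_le
      _ ≤ 2*ρ*A*‖h₁-h₂‖ + C0*‖h₁-h₂‖*A*R + C0*‖h₁-h₂‖*R*(2*A)
          + (2*ρ*A*‖h₁-h₂‖ + C0*A*‖h₁-h₂‖*R + C0*R*‖h₁-h₂‖*(2*A))
          + (2*ρ*A*‖h₁-h₂‖ + C0*A*R*‖h₁-h₂‖ + C0*R*(2*A)*‖h₁-h₂‖) := by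
          gcongr
      _ ≤ (1/2) * ‖h₁ - h₂‖ := by
          have := aux_fin ρ A R C0 ‖h₁-h₂‖ hscal (norm_nonneg _)
          linarith
  have hΦ0 : ‖Φ 0‖ ≤ ρ * A^2 := by
    have h1 : Φ 0 = T u0 u0 u0 := by simp [hΦdef]
    rw [h1]
    refine (hdiag u0).trans ?_
    exact mul_le_mul_of_nonneg_left (pow_le_pow_left₀ (norm_nonneg u0) hu0 2) hρ0
  set s : Set X := Metric.closedBall (0:X) R with hsdef
  clear_value s
  have hmem_s : ∀ x : X, x ∈ s ↔ ‖x‖ ≤ R := by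
    intro x; rw [hsdef, Metric.mem_closedBall, dist_zero_right]
  have hmaps : Set.MapsTo Φ s s := by
    intro h hh
    rw [hmem_s] at hh ⊢
    have hz : ‖(0:X)‖ ≤ R := by simpa using hR0
    have h1 := hlip h 0 hh hz
    have h2 : Φ h - Φ 0 + Φ 0 = Φ h := by abel
    have h3 : ‖Φ h‖ ≤ ‖Φ h - Φ 0‖ + ‖Φ 0‖ :=
      le_trans (le_of_eq (congrArg norm h2.symm)) (norm_add_le _ _)
    simp only [sub_zero] at h1
    have hRval : R = 14 * A^2 * ρ := hRdef
    have hAρ : 0 ≤ A^2 * ρ := mul_nonneg (sq_nonneg A) hρ0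
    linarith
  have hsc : IsComplete s := by rw [hsdef]; exact Metric.isClosed_closedBall.isComplete
  have hcontr : ContractingWith (1/2 : NNReal) (hmaps.restrict Φ s s) := by
    constructor
    · have h12 : ((1/2 : NNReal) : ℝ) < 1 := by norm_num
      exact_mod_cast h12
    · apply LipschitzWith.of_dist_le_mul
      rintro ⟨x, hx⟩ ⟨y, hy⟩
      have hx' : ‖x‖ ≤ R := (hmem_s x).1 hx
      have hy' : ‖y‖ ≤ R := (hmem_s y).1 hy
      have e1 : dist ((hmaps.restrict Φ s s) ⟨x,hx⟩) ((hmaps.restrict Φ s s) ⟨y,hy⟩)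
          = ‖Φ x - Φ y‖ := by
        rw [Subtype.dist_eq, Set.MapsTo.val_restrict_apply, Set.MapsTo.val_restrict_apply,
          dist_eq_norm]
      have e2 : dist (⟨x,hx⟩ : s) (⟨y,hy⟩ : s) = ‖x - y‖ := by
        rw [Subtype.dist_eq, dist_eq_norm]
      rw [e1, e2]
      have hco : ((1/2 : NNReal) : ℝ) = 1/2 := by norm_num
      rw [hco]
      exact hlip x y hx' hy' 
  obtain ⟨h, hhs, hfix, -, -⟩ := hcontr.exists_fixedPoint' hsc hmaps
    (x := (0:X)) (by rw [hmem_s]; simpa using hR0) (edist_ne_top _ _)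
  refine ⟨u0 + h, ?_, ?_⟩
  · have h1 : Φ h = h := hfix
    have h2 : Φ h = T (u0+h) (u0+h) (u0+h) := by rw [hΦdef]
    rw [← h2, h1]
  · have h1 : ‖h‖ ≤ R := (hmem_s h).1 hhs
    have h2 : u0 + h - u0 = h := by abel
    rw [h2]
    linarith [h1, hRdef.le, hRdef.ge]
end
end
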